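/- For n ≥ 3 and odd k ≥ 3, and any indices j, i_1, i_2, …, i_{k-1} with j, i_1, i_2 pairwise distinct, twice the symmetric monomial x_j x_{i_1} ⋯ x_{i_{k-1}} ∈ S^k H lies in the image of the Morita trace MT_k restricted to the special derivation module b_n(k). -/

import Mathlib

open FreeLieAlgebra

/-- The degree-`k` homogeneous part of the free Lie ring on `n` generators,
spanned by left-normed brackets of `k` generators. -/
noncomputable def Ln (n : ℕ) : ℕ → Submodule ℤ (FreeLieAlgebra ℤ (Fin n))
  | 0 => ⊥
  | 1 => Submodule.span ℤ (Set.range (FreeLieAlgebra.of ℤ))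
  | (k+2) => Submodule.span ℤ
      {y | ∃ a ∈ Ln n (k+1), ∃ i : Fin n, y = ⁅a, FreeLieAlgebra.of ℤ i⁆}

/-- Left-normed bracket `[x, xs₁, xs₂, …]`. -/
noncomputable def lnb {n : ℕ} (x : Fin n) (xs : List (Fin n)) : FreeLieAlgebra ℤ (Fin n) :=
  xs.foldl (fun a j => ⁅a, FreeLieAlgebra.of ℤ j⁆) (FreeLieAlgebra.of ℤ x)

/-- The tangential derivation module `p_n(k)` in the representation
`H^* ⊗ L_n(k+1) ≅ (Fin n → L_n)`, spanned by the `x_i^* ⊗ [c, x_i]`. -/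
noncomputable def pnM (n k : ℕ) : Submodule ℤ (Fin n → FreeLieAlgebra ℤ (Fin n)) :=
  Submodule.span ℤ
    {f | ∃ i : Fin n, ∃ c ∈ Ln n k, f = Pi.single i ⁅c, FreeLieAlgebra.of ℤ i⁆}

/-- Summation map sending `Σ x_i^* ⊗ C_i` to `Σ C_i`. -/
noncomputable def sumMap (n : ℕ) :
    (Fin n → FreeLieAlgebra ℤ (Fin n)) →ₗ[ℤ] FreeLieAlgebra ℤ (Fin n) :=
  LinearMap.lsum ℤ (fun _ : Fin n => FreeLieAlgebra ℤ (Fin n)) ℤ (fun _ => LinearMap.id)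

/-- The special derivation module `b_n(k)`. -/
noncomputable def bnM (n k : ℕ) : Submodule ℤ (Fin n → FreeLieAlgebra ℤ (Fin n)) :=
  pnM n k ⊓ LinearMap.ker (sumMap n)

attribute [local instance] LieRing.ofAssociativeRing

/-- The embedding of the free Lie ring into the tensor (free) algebra. -/
noncomputable def embT (n : ℕ) : FreeLieAlgebra ℤ (Fin n) →ₗ[ℤ] FreeAlgebra ℤ (Fin n) :=
  (FreeLieAlgebra.lift ℤ (fun i : Fin n => FreeAlgebra.ι ℤ i)).toLinearMap

/-- The word `x_{j₁} ⊗ ⋯ ⊗ x_{j_m}` in the tensor algebra. -/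
def wordT {n : ℕ} (L : List (Fin n)) : FreeAlgebra ℤ (Fin n) :=
  (L.map (FreeAlgebra.ι ℤ)).prod

/-- Contraction of the first tensor factor against `x_i^*`. -/
noncomputable def contractT (n : ℕ) (i : Fin n) :
    FreeAlgebra ℤ (Fin n) →ₗ[ℤ] FreeAlgebra ℤ (Fin n) :=
  (FreeAlgebra.basisFreeMonoid ℤ (Fin n)).constr ℤ fun w =>
    match FreeMonoid.toList w with
    | [] => 0
    | j :: rest => if j = i then wordT rest else 0

/-- Abelianization of the tensor algebra, `T(H) → ⊕ₖ Sᵏ H`. -/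
noncomputable def abelT (n : ℕ) : FreeAlgebra ℤ (Fin n) →ₐ[ℤ] MvPolynomial (Fin n) ℤ :=
  FreeAlgebra.lift ℤ (fun i : Fin n => MvPolynomial.X i)

/-- The Morita trace component at index `p`. -/
noncomputable def MTc (n : ℕ) (p : Fin n) :
    FreeLieAlgebra ℤ (Fin n) →ₗ[ℤ] MvPolynomial (Fin n) ℤ :=
  (abelT n).toLinearMap ∘ₗ contractT n p ∘ₗ embT n

/-- The full Morita trace on `H^* ⊗ L_n(k+1) ≅ (Fin n → L_n)`. -/
noncomputable def MTfull (n : ℕ) :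
    (Fin n → FreeLieAlgebra ℤ (Fin n)) →ₗ[ℤ] MvPolynomial (Fin n) ℤ :=
  LinearMap.lsum ℤ (fun _ : Fin n => FreeLieAlgebra ℤ (Fin n)) ℤ (fun p => MTc n p)

lemma basis_eq_word {n : ℕ} (w : FreeMonoid (Fin n)) :
    FreeAlgebra.basisFreeMonoid ℤ (Fin n) w = wordT (FreeMonoid.toList w) := by
  rw [FreeAlgebra.basisFreeMonoid, Module.Basis.map_apply, Finsupp.coe_basisSingleOne]
  show (FreeAlgebra.equivMonoidAlgebraFreeMonoid (R := ℤ)).symm.toLinearEquiv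
      (MonoidAlgebra.single w 1) = _
  rw [AlgEquiv.toLinearEquiv_apply, AlgEquiv.symm_apply_eq]
  induction w using FreeMonoid.recOn with
  | one => simp [MonoidAlgebra.one_def, wordT]
  | of_mul x xs ih =>
      rw [show FreeMonoid.toList (FreeMonoid.of x * xs) = x :: FreeMonoid.toList xs from rfl]
      rw [wordT, List.map_cons, List.prod_cons, map_mul]
      rw [show wordT (FreeMonoid.toList xs) = (List.map (FreeAlgebra.ι ℤ) (FreeMonoid.toList xs)).prod from rfl] at ih
      rw [← ih]
      rw [show (FreeAlgebra.equivMonoidAlgebraFreeMonoid (R := ℤ)) (FreeAlgebra.ι ℤ x) =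
        MonoidAlgebra.of ℤ (FreeMonoid (Fin n)) (FreeMonoid.of x) by
          simp [FreeAlgebra.equivMonoidAlgebraFreeMonoid]]
      rw [MonoidAlgebra.of_apply, MonoidAlgebra.single_mul_single, one_mul]

lemma contract_word {n : ℕ} (i : Fin n) (L : List (Fin n)) :
    contractT n i (wordT L) = (match L with
      | [] => 0
      | j :: rest => if j = i then wordT rest else 0) := by
  have h : wordT L = FreeAlgebra.basisFreeMonoid ℤ (Fin n) (FreeMonoid.ofList L) := by
    rw [basis_eq_word, FreeMonoid.toList_ofList]
  rw [h, contractT]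
  erw [Module.Basis.constr_basis]
  cases L <;> simp [FreeMonoid.toList_ofList]

lemma contract_one {n : ℕ} (i : Fin n) : contractT n i 1 = 0 := by
  have := contract_word i ([] : List (Fin n))
  simpa [wordT] using this

lemma contract_iota_mul {n : ℕ} (i j : Fin n) (z : FreeAlgebra ℤ (Fin n)) :
    contractT n i (FreeAlgebra.ι ℤ j * z) = if j = i then z else 0 := by
  have key : (contractT n i).comp (LinearMap.mulLeft ℤ (FreeAlgebra.ι ℤ j)) =
      if j = i then (LinearMap.id : FreeAlgebra ℤ (Fin n) →ₗ[ℤ] _) else 0 := by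
    apply (FreeAlgebra.basisFreeMonoid ℤ (Fin n)).ext
    intro w
    rw [basis_eq_word]
    have : FreeAlgebra.ι ℤ j * wordT (FreeMonoid.toList w) = wordT (j :: FreeMonoid.toList w) := by
      rw [wordT, wordT, List.map_cons, List.prod_cons]
    erw [LinearMap.comp_apply, LinearMap.mulLeft_apply, this, contract_word]
    by_cases h : j = i
    · show (if j = i then wordT (FreeMonoid.toList w) else 0) = _
      rw [if_pos h, if_pos h]; rfl
    · show (if j = i then wordT (FreeMonoid.toList w) else 0) = _
      rw [if_neg h, if_neg h]; rfl
  have := congrArg (fun f => f z) key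
  simp only [LinearMap.comp_apply, LinearMap.mulLeft_apply] at this
  rw [this]
  split <;> simp

lemma eps_word {n : ℕ} (j : Fin n) (L : List (Fin n)) :
    FreeAlgebra.algebraMapInv (wordT (j :: L)) = 0 := by
  rw [wordT, List.map_cons, List.prod_cons, map_mul]
  simp [FreeAlgebra.algebraMapInv]

lemma contract_mul {n : ℕ} (i : Fin n) (x y : FreeAlgebra ℤ (Fin n)) :
    contractT n i (x * y) = contractT n i x * y
      + (FreeAlgebra.algebraMapInv x : ℤ) • contractT n i y := by
  induction x using FreeAlgebra.induction generalizing y with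
  | grade0 r =>
      have hs : ∀ z : FreeAlgebra ℤ (Fin n),
          contractT n i (algebraMap ℤ _ r * z) = r • contractT n i z := by
        intro z
        rw [eq_intCast, ← zsmul_eq_mul]
        exact map_zsmul (contractT n i) r z
      have h1 := hs 1
      rw [mul_one] at h1
      rw [hs, h1, contract_one, FreeAlgebra.algebraMap_leftInverse]
      simp
  | grade1 q =>
      rw [contract_iota_mul]
      have h1 := contract_iota_mul i q 1
      rw [mul_one] at h1
      rw [h1]
      simp [FreeAlgebra.algebraMapInv]
  | mul a b ha hb =>
      rw [mul_assoc, ha, hb, ha b, map_mul]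
      simp only [add_mul, smul_mul_assoc, smul_add, mul_smul, mul_assoc]
      abel
  | add a b ha hb =>
      rw [add_mul, map_add, map_add, ha, hb, map_add, add_mul, add_smul]
      abel

lemma eps_emb {n : ℕ} (c : FreeLieAlgebra ℤ (Fin n)) :
    FreeAlgebra.algebraMapInv (embT n c) = 0 := by
  let g : FreeLieAlgebra ℤ (Fin n) →ₗ⁅ℤ⁆ ℤ :=
    (FreeAlgebra.algebraMapInv (R := ℤ) (X := Fin n)).toLieHom.comp
      (FreeLieAlgebra.lift ℤ (fun i : Fin n => FreeAlgebra.ι ℤ i))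
  have hg : (FreeLieAlgebra.lift ℤ).symm g = (fun _ : Fin n => (0 : ℤ)) := by
    funext i
    show FreeAlgebra.algebraMapInv ((FreeLieAlgebra.lift ℤ (fun i : Fin n => FreeAlgebra.ι ℤ i)) (FreeLieAlgebra.of ℤ i)) = 0
    rw [FreeLieAlgebra.lift_of_apply]
    simp [FreeAlgebra.algebraMapInv]
  have h0 : (FreeLieAlgebra.lift ℤ).symm (0 : FreeLieAlgebra ℤ (Fin n) →ₗ⁅ℤ⁆ ℤ)
      = (fun _ : Fin n => (0 : ℤ)) := by
    funext i
    rfl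
  have hg0 : g = 0 := (FreeLieAlgebra.lift ℤ).symm.injective (hg.trans h0.symm)
  have := congrArg (fun f => f c) hg0
  exact this

lemma emb_lie {n : ℕ} (c d : FreeLieAlgebra ℤ (Fin n)) :
    embT n ⁅c, d⁆ = embT n c * embT n d - embT n d * embT n c := by
  show (FreeLieAlgebra.lift ℤ _) ⁅c, d⁆ = _
  rw [LieHom.map_lie, Ring.lie_def]
  rfl

noncomputable def abL (n : ℕ) : FreeLieAlgebra ℤ (Fin n) →ₗ[ℤ] MvPolynomial (Fin n) ℤ :=
  (abelT n).toLinearMap ∘ₗ embT n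

lemma abL_lie {n : ℕ} (c d : FreeLieAlgebra ℤ (Fin n)) : abL n ⁅c, d⁆ = 0 := by
  show abelT n (embT n ⁅c, d⁆) = 0
  simp only [emb_lie, map_sub, map_mul]
  ring

lemma emb_of {n : ℕ} (q : Fin n) :
    embT n (FreeLieAlgebra.of ℤ q) = FreeAlgebra.ι ℤ q := by
  show (FreeLieAlgebra.lift ℤ (fun i : Fin n => FreeAlgebra.ι ℤ i)) (FreeLieAlgebra.of ℤ q) = _
  exact FreeLieAlgebra.lift_of_apply _ _

lemma abL_of {n : ℕ} (q : Fin n) : abL n (FreeLieAlgebra.of ℤ q) = MvPolynomial.X q := by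
  show abelT n (embT n (FreeLieAlgebra.of ℤ q)) = _
  simp [emb_of, abelT]

lemma MTc_lie {n : ℕ} (p : Fin n) (c d : FreeLieAlgebra ℤ (Fin n)) :
    MTc n p ⁅c, d⁆ = MTc n p c * abL n d - MTc n p d * abL n c := by
  show abelT n (contractT n p (embT n ⁅c, d⁆)) = abelT n (contractT n p (embT n c)) * abelT n (embT n d)
    - abelT n (contractT n p (embT n d)) * abelT n (embT n c)
  simp only [emb_lie, map_sub,
    contract_mul, eps_emb, zero_smul, add_zero, map_add, map_mul]

lemma MTc_of {n : ℕ} (p q : Fin n) :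
    MTc n p (FreeLieAlgebra.of ℤ q) = if q = p then 1 else 0 := by
  show abelT n (contractT n p (embT n (FreeLieAlgebra.of ℤ q))) = _
  rw [emb_of]
  rw [show FreeAlgebra.ι ℤ q = wordT [q] by simp [wordT]]
  rw [show contractT n p (wordT [q]) = if q = p then wordT [] else 0 from contract_word p [q]]
  split <;> simp [wordT, abelT]

lemma MTc_lie_of {n : ℕ} (p q : Fin n) (c : FreeLieAlgebra ℤ (Fin n)) :
    MTc n p ⁅c, FreeLieAlgebra.of ℤ q⁆
      = MTc n p c * MvPolynomial.X q - (if q = p then 1 else 0) * abL n c := by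
  rw [MTc_lie, abL_of, MTc_of]

lemma lnb_nil {n : ℕ} (q : Fin n) : lnb q [] = FreeLieAlgebra.of ℤ q := rfl

lemma lnb_append_singleton {n : ℕ} (q x : Fin n) (L : List (Fin n)) :
    lnb q (L ++ [x]) = ⁅lnb q L, FreeLieAlgebra.of ℤ x⁆ := by
  simp [lnb, List.foldl_append]

lemma lnb_cons {n : ℕ} (q r : Fin n) (L : List (Fin n)) :
    lnb q (r :: L) = L.foldl (fun a j => ⁅a, FreeLieAlgebra.of ℤ j⁆)
      ⁅FreeLieAlgebra.of ℤ q, FreeLieAlgebra.of ℤ r⁆ := rfl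

lemma mem_Ln_step {n m : ℕ} {a : FreeLieAlgebra ℤ (Fin n)} (ha : a ∈ Ln n (m + 1))
    (x : Fin n) : ⁅a, FreeLieAlgebra.of ℤ x⁆ ∈ Ln n (m + 2) := by
  rw [show Ln n (m + 2) = Submodule.span ℤ
      {y | ∃ a ∈ Ln n (m+1), ∃ i : Fin n, y = ⁅a, FreeLieAlgebra.of ℤ i⁆} from rfl]
  exact Submodule.subset_span ⟨a, ha, x, rfl⟩

lemma bracket_of_mem {n m : ℕ} {a : FreeLieAlgebra ℤ (Fin n)} (hm : 1 ≤ m)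
    (ha : a ∈ Ln n m) (x : Fin n) : ⁅a, FreeLieAlgebra.of ℤ x⁆ ∈ Ln n (m + 1) := by
  obtain ⟨m', rfl⟩ : ∃ m', m = m' + 1 := ⟨m - 1, by omega⟩
  exact mem_Ln_step ha x

lemma of_mem_Ln1 {n : ℕ} (q : Fin n) : FreeLieAlgebra.of ℤ q ∈ Ln n 1 := by
  rw [show Ln n 1 = Submodule.span ℤ (Set.range (FreeLieAlgebra.of ℤ)) from rfl]
  exact Submodule.subset_span ⟨q, rfl⟩

lemma lnb_mem {n : ℕ} (q : Fin n) (L : List (Fin n)) : lnb q L ∈ Ln n (L.length + 1) := by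
  induction L using List.reverseRecOn with
  | nil => exact of_mem_Ln1 q
  | append_singleton L x ih =>
      rw [lnb_append_singleton]
      simpa using bracket_of_mem (by omega) ih x

lemma bracket_lnb_mem {n : ℕ} (q : Fin n) (L : List (Fin n)) :
    ∀ (m : ℕ) (a : FreeLieAlgebra ℤ (Fin n)), 1 ≤ m → a ∈ Ln n m →
      ⁅a, lnb q L⁆ ∈ Ln n (m + L.length + 1) := by
  induction L using List.reverseRecOn with
  | nil =>
      intro m a hm ha
      simpa [lnb_nil] using bracket_of_mem hm ha q
  | append_singleton L x ih =>
      intro m a hm ha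
      rw [lnb_append_singleton]
      have key : ⁅a, ⁅lnb q L, FreeLieAlgebra.of ℤ x⁆⁆
          = ⁅⁅a, lnb q L⁆, FreeLieAlgebra.of ℤ x⁆ - ⁅⁅a, FreeLieAlgebra.of ℤ x⁆, lnb q L⁆ := by
        rw [leibniz_lie a (lnb q L) (FreeLieAlgebra.of ℤ x)]
        rw [← lie_skew (lnb q L) ⁅a, FreeLieAlgebra.of ℤ x⁆]
        abel
      rw [key]
      have h1 : ⁅⁅a, lnb q L⁆, FreeLieAlgebra.of ℤ x⁆ ∈ Ln n (m + (L ++ [x]).length + 1) := by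
        have := bracket_of_mem (m := m + L.length + 1) (by omega) (ih m a hm ha) x
        simpa [Nat.add_assoc, Nat.add_comm, Nat.add_left_comm] using this
      have h2 : ⁅⁅a, FreeLieAlgebra.of ℤ x⁆, lnb q L⁆ ∈ Ln n (m + (L ++ [x]).length + 1) := by
        have := ih (m + 1) ⁅a, FreeLieAlgebra.of ℤ x⁆ (by omega) (bracket_of_mem hm ha x)
        simpa [Nat.add_assoc, Nat.add_comm, Nat.add_left_comm] using this
      exact sub_mem h1 h2

lemma abL_lnb_cons {n : ℕ} (q r : Fin n) (L : List (Fin n)) : abL n (lnb q (r :: L)) = 0 := by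
  induction L using List.reverseRecOn with
  | nil => rw [show lnb q [r] = ⁅FreeLieAlgebra.of ℤ q, FreeLieAlgebra.of ℤ r⁆ from rfl, abL_lie]
  | append_singleton L x ih =>
      rw [show r :: (L ++ [x]) = (r :: L) ++ [x] from rfl, lnb_append_singleton, abL_lie]

lemma abL_lnb_ne_nil {n : ℕ} (q : Fin n) {L : List (Fin n)} (h : L ≠ []) :
    abL n (lnb q L) = 0 := by
  cases L with
  | nil => exact absurd rfl h
  | cons r L => exact abL_lnb_cons q r L

lemma MTc_lnb {n : ℕ} (p q r : Fin n) (L : List (Fin n)) :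
    MTc n p (lnb q (r :: L)) =
      ((if q = p then 1 else 0) * MvPolynomial.X r
        - (if r = p then 1 else 0) * MvPolynomial.X q) * (L.map MvPolynomial.X).prod := by
  induction L using List.reverseRecOn with
  | nil =>
      rw [show lnb q [r] = ⁅FreeLieAlgebra.of ℤ q, FreeLieAlgebra.of ℤ r⁆ from rfl,
        MTc_lie_of, MTc_of, abL_of]
      simp
  | append_singleton L x ih =>
      rw [show r :: (L ++ [x]) = (r :: L) ++ [x] from rfl, lnb_append_singleton,
        MTc_lie_of, ih, abL_lnb_cons]
      simp [mul_assoc]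

lemma MTfull_single {n : ℕ} (p : Fin n) (c : FreeLieAlgebra ℤ (Fin n)) :
    MTfull n (Pi.single p c) = MTc n p c := by
  simp [MTfull, LinearMap.lsum_apply, Pi.single_apply, apply_ite, Finset.sum_ite_eq']

lemma sumMap_single {n : ℕ} (p : Fin n) (c : FreeLieAlgebra ℤ (Fin n)) :
    sumMap n (Pi.single p c) = c := by
  simp [sumMap, LinearMap.lsum_apply, Pi.single_apply, apply_ite, Finset.sum_ite_eq']

/-- Right-to-left expansion of `⁅b, lnb q R.reverse⁆` into special-derivation form. -/
noncomputable def gg {n : ℕ} (q : Fin n) :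
    List (Fin n) → FreeLieAlgebra ℤ (Fin n) → (Fin n → FreeLieAlgebra ℤ (Fin n))
  | [], b => Pi.single q ⁅b, FreeLieAlgebra.of ℤ q⁆
  | x :: R, b => Pi.single x ⁅⁅b, lnb q R.reverse⁆, FreeLieAlgebra.of ℤ x⁆
      - gg q R ⁅b, FreeLieAlgebra.of ℤ x⁆

lemma sumMap_gg {n : ℕ} (q : Fin n) (R : List (Fin n)) :
    ∀ b, sumMap n (gg q R b) = ⁅b, lnb q R.reverse⁆ := by
  induction R with
  | nil => intro b; rw [gg, sumMap_single, List.reverse_nil, lnb_nil]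
  | cons x R ih =>
      intro b
      rw [gg, map_sub, sumMap_single, ih]
      rw [List.reverse_cons, lnb_append_singleton]
      rw [leibniz_lie b (lnb q R.reverse) (FreeLieAlgebra.of ℤ x)]
      rw [← lie_skew (lnb q R.reverse) ⁅b, FreeLieAlgebra.of ℤ x⁆]
      abel

lemma gg_mem {n : ℕ} (q : Fin n) (R : List (Fin n)) :
    ∀ (m : ℕ) (b : FreeLieAlgebra ℤ (Fin n)), 1 ≤ m → b ∈ Ln n m →
      gg q R b ∈ pnM n (m + R.length) := by
  induction R with
  | nil =>
      intro m b hm hb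
      rw [gg]
      exact Submodule.subset_span ⟨q, b, by simpa using hb, rfl⟩
  | cons x R ih =>
      intro m b hm hb
      rw [gg]
      apply sub_mem
      · apply Submodule.subset_span
        refine ⟨x, ⁅b, lnb q R.reverse⁆, ?_, rfl⟩
        have := bracket_lnb_mem q R.reverse m b hm hb
        have hlen : m + R.reverse.length + 1 = m + (x :: R).length := by
          simp; omega
        rwa [hlen] at this
      · have := ih (m + 1) ⁅b, FreeLieAlgebra.of ℤ x⁆ (by omega) (bracket_of_mem hm hb x)
        have hlen : m + 1 + R.length = m + (x :: R).length := by simp; omega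
        rwa [hlen] at this

lemma MTfull_gg {n : ℕ} (q : Fin n) (R : List (Fin n)) :
    ∀ (x : Fin n) (b : FreeLieAlgebra ℤ (Fin n)), abL n b = 0 →
      MTfull n (gg q (x :: R) b) =
        (-1 : MvPolynomial (Fin n) ℤ) ^ R.length *
          ((MTc n ((x :: R).getLast (by simp)) b - MTc n q b) * MvPolynomial.X q *
            (((x :: R).map MvPolynomial.X).prod)) := by
  induction R with
  | nil =>
      intro x b hb
      rw [gg, gg, map_sub, MTfull_single, MTfull_single]
      rw [List.reverse_nil, lnb_nil]
      rw [MTc_lie_of, MTc_lie_of, MTc_lie_of, MTc_lie_of]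
      rw [abL_lie, abL_lie, hb]
      simp only [List.getLast_singleton, List.map_cons, List.map_nil, List.prod_cons,
        List.prod_nil, List.length_nil, pow_zero]
      ring
  | cons y R ih =>
      intro x b hb
      rw [show gg q (x :: y :: R) b = Pi.single x
          ⁅⁅b, lnb q (y :: R).reverse⁆, FreeLieAlgebra.of ℤ x⁆
            - gg q (y :: R) ⁅b, FreeLieAlgebra.of ℤ x⁆ from rfl]
      rw [map_sub, MTfull_single]
      rw [MTc_lie_of, abL_lie]
      rw [MTc_lie (n := n) x b (lnb q (y :: R).reverse)]
      rw [abL_lnb_ne_nil q (by simp), hb]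
      rw [ih y ⁅b, FreeLieAlgebra.of ℤ x⁆ (abL_lie b (FreeLieAlgebra.of ℤ x))]
      rw [MTc_lie_of, MTc_lie_of, hb]
      rw [List.getLast_cons (by simp : y :: R ≠ [])]
      simp only [List.map_cons, List.prod_cons, List.length_cons, pow_succ]
      ring

lemma MTfull_gg' {n : ℕ} (q : Fin n) (R : List (Fin n)) (hR : R ≠ [])
    (b : FreeLieAlgebra ℤ (Fin n)) (hb : abL n b = 0) :
    MTfull n (gg q R b) =
      (-1 : MvPolynomial (Fin n) ℤ) ^ (R.length - 1) *
        ((MTc n (R.getLast hR) b - MTc n q b) * MvPolynomial.X q *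
          ((R.map MvPolynomial.X).prod)) := by
  cases R with
  | nil => exact absurd rfl hR
  | cons x R => simpa using MTfull_gg q R x b hb

lemma main_aux {n : ℕ} (rest : List (Fin n)) (hrest : Even rest.length)
    (j i1 i2 : Fin n) (hj1 : j ≠ i1) (hj2 : j ≠ i2) (h12 : i1 ≠ i2) :
    ∃ f ∈ bnM n (rest.length + 3), MTfull n f =
      2 * (MvPolynomial.X j * (((i1 :: i2 :: rest).map MvPolynomial.X).prod)) := by
  set k := rest.length + 3 with hk
  set tail : List (Fin n) := i2 :: rest with htail
  set a := lnb i1 tail with ha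
  set b : FreeLieAlgebra ℤ (Fin n) := ⁅FreeLieAlgebra.of ℤ j, FreeLieAlgebra.of ℤ i1⁆ with hbdef
  set R := tail.reverse with hR
  have hRne : R ≠ [] := by simp [hR, htail]
  have ha_mem : a ∈ Ln n (rest.length + 2) := by
    have := lnb_mem i1 tail
    simpa [htail] using this
  have hc1_mem : (⁅a, FreeLieAlgebra.of ℤ j⁆ : FreeLieAlgebra ℤ (Fin n)) ∈ Ln n k := by
    have := bracket_of_mem (m := rest.length + 2) (by omega) ha_mem j
    simpa [hk] using this
  have hc2_mem : (⁅a, FreeLieAlgebra.of ℤ i1⁆ : FreeLieAlgebra ℤ (Fin n)) ∈ Ln n k := by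
    have := bracket_of_mem (m := rest.length + 2) (by omega) ha_mem i1
    simpa [hk] using this
  have hb_mem : b ∈ Ln n 2 := mem_Ln_step (m := 0) (of_mem_Ln1 j) i1
  have hab : abL n b = 0 := abL_lie _ _
  refine ⟨Pi.single i1 ⁅⁅a, FreeLieAlgebra.of ℤ j⁆, FreeLieAlgebra.of ℤ i1⁆
      - Pi.single j ⁅⁅a, FreeLieAlgebra.of ℤ i1⁆, FreeLieAlgebra.of ℤ j⁆
      + gg i1 R b, ⟨?_, ?_⟩, ?_⟩
  · -- membership in pnM n k
    apply add_mem
    · apply sub_mem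
      · exact Submodule.subset_span ⟨i1, _, hc1_mem, rfl⟩
      · exact Submodule.subset_span ⟨j, _, hc2_mem, rfl⟩
    · have := gg_mem i1 R 2 b (by omega) hb_mem
      have hlen : 2 + R.length = k := by simp [hR, htail, hk]; omega
      rwa [hlen] at this
  · -- kernel of sumMap
    simp only [SetLike.mem_coe, LinearMap.mem_ker]
    rw [map_add, map_sub, sumMap_single, sumMap_single, sumMap_gg]
    have hRrev : R.reverse = tail := by simp [hR]
    rw [hRrev]
    have hjac : ⁅⁅a, FreeLieAlgebra.of ℤ j⁆, FreeLieAlgebra.of ℤ i1⁆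
        - ⁅⁅a, FreeLieAlgebra.of ℤ i1⁆, FreeLieAlgebra.of ℤ j⁆ = ⁅a, b⁆ := by
      rw [hbdef, leibniz_lie a (FreeLieAlgebra.of ℤ j) (FreeLieAlgebra.of ℤ i1)]
      rw [← lie_skew (FreeLieAlgebra.of ℤ j) ⁅a, FreeLieAlgebra.of ℤ i1⁆]
      abel
    rw [hjac, ← lie_skew a b]
    abel
  · -- the trace computation
    rw [map_add, map_sub, MTfull_single, MTfull_single]
    rw [MTfull_gg' i1 R hRne b hab]
    have h_abL_a : abL n a = 0 := abL_lnb_cons i1 i2 rest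
    have hgetLast : R.getLast hRne = i2 := by
      simp [hR, htail, List.getLast_reverse]
    have hlen1 : R.length - 1 = rest.length := by simp [hR, htail]
    have hprod : ((R.map MvPolynomial.X).prod : MvPolynomial (Fin n) ℤ)
        = (tail.map MvPolynomial.X).prod := by
      rw [hR, List.map_reverse, List.prod_reverse]
    rw [hgetLast, hlen1, hprod, Even.neg_one_pow hrest]
    -- component traces
    rw [MTc_lie_of, MTc_lie_of, MTc_lie_of, MTc_lie_of]
    rw [h_abL_a, abL_lie, abL_lie]
    rw [show MTc n i1 a = ((if i1 = i1 then 1 else 0) * MvPolynomial.X i2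
        - (if i2 = i1 then 1 else 0) * MvPolynomial.X i1) * (rest.map MvPolynomial.X).prod
      from MTc_lnb i1 i1 i2 rest]
    rw [show MTc n j a = ((if i1 = j then 1 else 0) * MvPolynomial.X i2
        - (if i2 = j then 1 else 0) * MvPolynomial.X i1) * (rest.map MvPolynomial.X).prod
      from MTc_lnb j i1 i2 rest]
    rw [hbdef, MTc_lie_of, MTc_lie_of, MTc_of, MTc_of, abL_of]
    simp only [eq_self_iff_true, if_true, if_pos rfl, if_neg hj1, if_neg hj2, if_neg (Ne.symm hj1), if_neg (Ne.symm hj2),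
      if_neg h12, if_neg (Ne.symm h12), htail, List.map_cons, List.prod_cons]
    ring

/-- For `n ≥ 3`, odd `k ≥ 3`, and indices `j, i₁, …, i_{k-1}` with `j, i₁, i₂` pairwise
distinct, twice the monomial `x_j x_{i₁} ⋯ x_{i_{k-1}}` lies in the image of the Morita
trace restricted to the special derivation module `b_n(k)`. -/
theorem two_monomial_in_morita_image (n k : ℕ) (hn : 3 ≤ n) (h3 : 3 ≤ k) (hk : Odd k)
    (j : Fin n) (is : Fin (k - 1) → Fin n)
    (h1 : j ≠ is ⟨0, by omega⟩) (h2 : j ≠ is ⟨1, by omega⟩)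
    (h12 : is ⟨0, by omega⟩ ≠ is ⟨1, by omega⟩) :
    ∃ f ∈ bnM n k, MTfull n f =
      2 * (MvPolynomial.X j * ∏ t : Fin (k - 1), MvPolynomial.X (is t)) := by
  set rest : List (Fin n) := List.ofFn (fun t : Fin (k - 3) => is ⟨t.1 + 2, by omega⟩)
    with hrest_def
  have hlen : rest.length = k - 3 := by simp [hrest_def]
  have hEven : Even rest.length := by
    rw [hlen, Nat.even_iff]
    obtain ⟨m, hm⟩ := hk
    omega
  obtain ⟨f, hf, htr⟩ := main_aux rest hEven j (is ⟨0, by omega⟩) (is ⟨1, by omega⟩) h1 h2 h12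
  have hlen3 : rest.length + 3 = k := by omega
  refine ⟨f, by rwa [hlen3] at hf, ?_⟩
  rw [htr]
  have hofn : List.ofFn is = is ⟨0, by omega⟩ :: is ⟨1, by omega⟩ ::
      List.ofFn (fun t : Fin (k - 3) => is ⟨t.1 + 2, by omega⟩) := by
    apply List.ext_getElem
    · simp; omega
    · intro m hm1 hm2
      rw [List.getElem_ofFn]
      match m, hm2 with
      | 0, _ => rfl
      | 1, _ => rfl
      | (m + 2), hm2 =>
          simp only [List.getElem_cons_succ]
          exact (List.getElem_ofFn (f := fun t : Fin (k - 3) => is ⟨t.1 + 2, by omega⟩) (i := m)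
            (by simp only [List.length_ofFn] at hm1 ⊢; omega : m < (List.ofFn fun t : Fin (k - 3) =>
              is ⟨t.1 + 2, by omega⟩).length)).symm
  rw [← hrest_def] at hofn
  have hprod : (∏ t : Fin (k - 1), MvPolynomial.X (is t) : MvPolynomial (Fin n) ℤ)
      = ((List.ofFn is).map MvPolynomial.X).prod := by
    rw [List.map_ofFn, List.prod_ofFn]
    rfl
  rw [hprod, hofn]
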